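/- For all positive integers n and nonnegative integers k, ∑_{s=1}^{n} (-1)^{n-s} · s · C(n + s(k+1) - 1, 2n-1) · C(2n, n-s) = n·(k+1)^{2n-1}, where C(a,b) is the ordinary binomial coefficient (with C(a,b)=0 if a<b). -/

import Mathlib

open Finset Polynomial

private lemma fwdDiff_pow_eq_sum (d : ℕ) :
    fwdDiff (1:ℤ) (fun x : ℤ => x ^ d) =
      ∑ i ∈ Finset.range d, (d.choose i : ℤ) • (fun x : ℤ => x ^ i) := by
  funext x
  have h := add_pow x (1:ℤ) d
  simp only [one_pow, mul_one] at h
  simp only [fwdDiff, h, Finset.sum_range_succ, Nat.choose_self, Nat.cast_one, mul_one,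
    add_sub_cancel_right, Finset.sum_apply, Pi.smul_apply, smul_eq_mul]
  exact Finset.sum_congr rfl fun i _ => mul_comm _ _

private lemma fwdDiff_iter_pow (N : ℕ) : ∀ d ≤ N,
    (fwdDiff (1:ℤ))^[N] (fun x : ℤ => x ^ d) =
      fun _ : ℤ => if d = N then (Nat.factorial N : ℤ) else 0 := by
  induction N with
  | zero =>
    intro d hd
    interval_cases d
    simp [Nat.factorial]
  | succ N IH =>
    intro d hd
    rw [Function.iterate_succ_apply, fwdDiff_pow_eq_sum, fwdDiff_iter_finset_sum]
    simp only [fwdDiff_iter_const_smul]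
    funext x
    rw [Finset.sum_apply]
    by_cases hdN : d = N + 1
    · subst hdN
      rw [Finset.sum_eq_single N]
      · rw [IH N le_rfl]
        simp [Nat.factorial_succ]
      · intro i hi hne
        rw [IH i (by simp at hi; omega)]
        simp [hne]
      · intro h
        simp at h
    · rw [if_neg hdN]
      apply Finset.sum_eq_zero
      intro i hi
      have hi' : i < d := Finset.mem_range.mp hi
      have h1 : i ≤ N := by omega
      have h2 : i ≠ N := by omega
      rw [IH i h1]
      simp [h2]

private lemma fwdDiff_iter_eval (N : ℕ) (P : Polynomial ℤ) (hP : P.natDegree ≤ N) (y : ℤ) :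
    (fwdDiff (1:ℤ))^[N] (fun x : ℤ => P.eval x) y = (Nat.factorial N : ℤ) * P.coeff N := by
  have h1 : (fun x : ℤ => P.eval x) =
      ∑ i ∈ Finset.range (N + 1), P.coeff i • (fun x : ℤ => x ^ i) := by
    funext x
    rw [Polynomial.eval_eq_sum_range' (Nat.lt_succ_of_le hP)]
    simp [Finset.sum_apply]
  rw [h1, fwdDiff_iter_finset_sum]
  simp only [fwdDiff_iter_const_smul]
  rw [Finset.sum_apply, Finset.sum_eq_single N]
  · rw [fwdDiff_iter_pow N N le_rfl]
    simp [mul_comm]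
  · intro i hi hne
    rw [fwdDiff_iter_pow N i (by simp at hi; omega)]
    simp [hne]
  · intro h
    simp at h

private lemma prod_range_cast_sub (a b : ℕ) :
    ∏ i ∈ Finset.range b, ((a : ℤ) - i) = (a.descFactorial b : ℤ) := by
  induction b with
  | zero => simp
  | succ b ih =>
    rw [Finset.prod_range_succ, ih, Nat.descFactorial_succ, Nat.cast_mul]
    rcases le_or_gt b a with h | h
    · rw [Nat.cast_sub h]
      ring
    · rw [Nat.descFactorial_eq_zero_iff_lt.mpr h]
      push_cast
      ring

/-- For `n ≥ 1` and `k ∈ ℕ`,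
`∑_{s=1}^{n} (-1)^{n-s} s C(n+s(k+1)-1, 2n-1) C(2n, n-s) = n (k+1)^{2n-1}`,
where `C` is the ordinary binomial coefficient (zero when the top is smaller). -/
theorem steinberg_even_orthogonal_identity (n k : ℕ) (hn : 1 ≤ n) :
    ∑ s ∈ Finset.Icc 1 n, (-1 : ℤ) ^ (n - s) * (s : ℤ) *
        (Nat.choose (n + s * (k + 1) - 1) (2 * n - 1) : ℤ) *
        (Nat.choose (2 * n) (n - s) : ℤ) =
      (n : ℤ) * ((k : ℤ) + 1) ^ (2 * n - 1) := by
  set m : ℤ := (k : ℤ) + 1 with hm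
  have hm0 : m ≠ 0 := by positivity
  set Q : Polynomial ℤ :=
    ∏ i ∈ Finset.range (2 * n - 1), (C m * X + C ((n : ℤ) - 1 - i)) with hQ
  set P : Polynomial ℤ := X * Q with hP
  have hfne : ∀ i ∈ Finset.range (2 * n - 1), (C m * X + C ((n : ℤ) - 1 - (i : ℤ))) ≠ 0 := by
    intro i _ h
    have h1 := natDegree_linear (b := (n : ℤ) - 1 - (i : ℤ)) hm0
    rw [h] at h1
    simp at h1
  have hQdeg : Q.natDegree = 2 * n - 1 := by
    have hd : ∀ i ∈ Finset.range (2 * n - 1),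
        (C m * X + C ((n : ℤ) - 1 - (i : ℤ))).natDegree = 1 := fun i _ => natDegree_linear hm0
    rw [hQ, Polynomial.natDegree_prod _ _ hfne, Finset.sum_congr rfl hd, Finset.sum_const,
      smul_eq_mul, mul_one, Finset.card_range]
  have hQ0 : Q ≠ 0 := by
    intro h
    rw [h] at hQdeg
    simp at hQdeg
    omega
  have hPdeg : P.natDegree = 2 * n := by
    rw [hP, Polynomial.natDegree_mul Polynomial.X_ne_zero hQ0, Polynomial.natDegree_X, hQdeg]
    omega
  have hPlead : P.coeff (2 * n) = m ^ (2 * n - 1) := by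
    have h1 : P.coeff (2 * n) = P.leadingCoeff := by rw [Polynomial.leadingCoeff, hPdeg]
    rw [h1, hP, Polynomial.leadingCoeff_mul, Polynomial.leadingCoeff_X, one_mul, hQ,
      Polynomial.leadingCoeff_prod]
    have hd : ∀ i ∈ Finset.range (2 * n - 1),
        (C m * X + C ((n : ℤ) - 1 - (i : ℤ))).leadingCoeff = m := fun i _ => leadingCoeff_linear hm0
    rw [Finset.prod_congr rfl hd, Finset.prod_const, Finset.card_range]
  have hEval : ∀ x : ℤ, P.eval x = x * ∏ i ∈ Finset.range (2 * n - 1), (m * x + ((n : ℤ) - 1 - i)) := by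
    intro x
    simp [hP, hQ, Polynomial.eval_prod]
  have hEven : ∀ x : ℤ, P.eval (-x) = P.eval x := by
    intro x
    rw [hEval, hEval]
    have h1 : ∏ i ∈ Finset.range (2 * n - 1), (m * (-x) + ((n : ℤ) - 1 - i))
        = ∏ i ∈ Finset.range (2 * n - 1), ((-1) * (m * x - ((n : ℤ) - 1 - i))) :=
      Finset.prod_congr rfl fun i _ => by ring
    have h2 : ∏ i ∈ Finset.range (2 * n - 1), ((-1 : ℤ) * (m * x - ((n : ℤ) - 1 - i)))
        = (-1) ^ (2 * n - 1) * ∏ i ∈ Finset.range (2 * n - 1), (m * x - ((n : ℤ) - 1 - i)) := by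
      rw [Finset.prod_mul_distrib, Finset.prod_const, Finset.card_range]
    have h3 : ∏ i ∈ Finset.range (2 * n - 1), (m * x - ((n : ℤ) - 1 - i))
        = ∏ i ∈ Finset.range (2 * n - 1), (m * x + ((n : ℤ) - 1 - i)) := by
      rw [← Finset.prod_range_reflect (fun i : ℕ => m * x + ((n : ℤ) - 1 - i)) (2 * n - 1)]
      apply Finset.prod_congr rfl
      intro i hi
      rw [Finset.mem_range] at hi
      have hc : ((2 * n - 1 - 1 - i : ℕ) : ℤ) = 2 * (n : ℤ) - 2 - i := by
        have : (2 * n - 1 - 1 - i : ℕ) = 2 * n - 2 - i := by omega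
        rw [this, Nat.cast_sub (by omega), Nat.cast_sub (by omega)]
        push_cast
        ring
      simp only [hc]
      ring
    rw [h1, h2, h3]
    have hodd : Odd (2 * n - 1) := ⟨n - 1, by omega⟩
    rw [hodd.neg_one_pow]
    ring
  have hVal : ∀ s : ℕ, 1 ≤ s → P.eval (s : ℤ) =
      (s : ℤ) * (Nat.factorial (2 * n - 1) : ℤ) * ((n + s * (k + 1) - 1).choose (2 * n - 1) : ℤ) := by
    intro s hs
    rw [hEval]
    have ha : ∀ i ∈ Finset.range (2 * n - 1),
        m * (s : ℤ) + ((n : ℤ) - 1 - i) = ((n + s * (k + 1) - 1 : ℕ) : ℤ) - i := by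
      intro i _
      have h1 : 1 ≤ n + s * (k + 1) := le_add_right hn
      rw [Nat.cast_sub h1, hm]
      push_cast
      ring
    rw [Finset.prod_congr rfl ha, prod_range_cast_sub,
      Nat.descFactorial_eq_factorial_mul_choose]
    push_cast
    ring
  -- main finite-difference computation
  have hsum := fwdDiff_iter_eq_sum_shift (1 : ℤ) (fun x : ℤ => P.eval x) (2 * n) (-(n : ℤ))
  rw [fwdDiff_iter_eval (2 * n) P (le_of_eq hPdeg) (-(n : ℤ)), hPlead] at hsum
  simp only [smul_eq_mul, nsmul_eq_mul, mul_one] at hsum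
  -- hsum : (2n)! * m^(2n-1) = ∑ j in range (2n+1), (-1)^(2n-j) * C(2n,j) * P.eval (-(n)+j)
  set T : ℤ := ∑ s ∈ Finset.Icc 1 n,
    (-1 : ℤ) ^ (n - s) * (Nat.choose (2 * n) (n - s) : ℤ) * P.eval (s : ℤ) with hT
  have hsplit : ∑ j ∈ Finset.range (2 * n + 1),
      ((-1 : ℤ) ^ (2 * n - j) * ((2 * n).choose j : ℤ)) * P.eval (-(n : ℤ) + j) = 2 * T := by
    have e1 : ∑ j ∈ Finset.range (2 * n + 1),
        ((-1 : ℤ) ^ (2 * n - j) * ((2 * n).choose j : ℤ)) * P.eval (-(n : ℤ) + j)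
        = (∑ j ∈ Finset.Ico 0 (n + 1),
            ((-1 : ℤ) ^ (2 * n - j) * ((2 * n).choose j : ℤ)) * P.eval (-(n : ℤ) + j))
          + ∑ j ∈ Finset.Ico (n + 1) (2 * n + 1),
            ((-1 : ℤ) ^ (2 * n - j) * ((2 * n).choose j : ℤ)) * P.eval (-(n : ℤ) + j) := by
      rw [Finset.range_eq_Ico, ← Finset.sum_Ico_consecutive _ (Nat.zero_le (n + 1)) (by omega)]
    have hP0 : P.eval (0 : ℤ) = 0 := by rw [hEval]; ring
    have e2 : ∑ j ∈ Finset.Ico 0 (n + 1),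
        ((-1 : ℤ) ^ (2 * n - j) * ((2 * n).choose j : ℤ)) * P.eval (-(n : ℤ) + j) = T := by
      rw [← Finset.range_eq_Ico, Finset.sum_range_succ]
      have hz : ((-1 : ℤ) ^ (2 * n - n) * ((2 * n).choose n : ℤ)) * P.eval (-(n : ℤ) + n) = 0 := by
        have : -(n : ℤ) + n = 0 := by ring
        rw [this, hP0]
        ring
      rw [hz, add_zero, hT]
      refine Finset.sum_nbij' (fun j => n - j) (fun s => n - s) ?_ ?_ ?_ ?_ ?_
      · intro j hj
        simp only [Finset.mem_range] at hj
        simp only [Finset.mem_Icc]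
        omega
      · intro s hs
        simp only [Finset.mem_Icc] at hs
        simp only [Finset.mem_range]
        omega
      · intro j hj
        simp only [Finset.mem_range] at hj
        omega
      · intro s hs
        simp only [Finset.mem_Icc] at hs
        omega
      · intro j hj
        simp only [Finset.mem_range] at hj
        have h1 : n - (n - j) = j := by omega
        have h2 : 2 * n - j = j + 2 * (n - j) := by omega
        have h3 : -(n : ℤ) + j = -(((n - j : ℕ) : ℤ)) := by
          rw [Nat.cast_sub (by omega)]
          ring
        rw [h1, h2, pow_add, pow_mul, neg_one_sq, one_pow, mul_one, h3, hEven]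
    have e3 : ∑ j ∈ Finset.Ico (n + 1) (2 * n + 1),
        ((-1 : ℤ) ^ (2 * n - j) * ((2 * n).choose j : ℤ)) * P.eval (-(n : ℤ) + j) = T := by
      rw [hT]
      refine Finset.sum_nbij' (fun j => j - n) (fun s => n + s) ?_ ?_ ?_ ?_ ?_
      · intro j hj
        simp only [Finset.mem_Ico] at hj
        simp only [Finset.mem_Icc]
        omega
      · intro s hs
        simp only [Finset.mem_Icc] at hs
        simp only [Finset.mem_Ico]
        omega
      · intro j hj
        simp only [Finset.mem_Ico] at hj
        omega
      · intro s hs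
        simp only [Finset.mem_Icc] at hs
        omega
      · intro j hj
        simp only [Finset.mem_Ico] at hj
        have h1 : 2 * n - j = n - (j - n) := by omega
        have h2 : (2 * n).choose j = (2 * n).choose (n - (j - n)) := by
          have hs1 : n - (j - n) = 2 * n - j := by omega
          rw [hs1, Nat.choose_symm (by omega)]
        have h3 : -(n : ℤ) + j = ((j - n : ℕ) : ℤ) := by
          rw [Nat.cast_sub (by omega)]
          ring
        rw [h1, ← h2, h3]
    rw [e1, e2, e3]
    ring
  rw [hsplit] at hsum
  -- hsum : (2n)! * m^(2n-1) = 2 * T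
  have hTL : T = (Nat.factorial (2 * n - 1) : ℤ) * ∑ s ∈ Finset.Icc 1 n, (-1 : ℤ) ^ (n - s) * (s : ℤ) *
      (Nat.choose (n + s * (k + 1) - 1) (2 * n - 1) : ℤ) * (Nat.choose (2 * n) (n - s) : ℤ) := by
    rw [hT, Finset.mul_sum]
    refine Finset.sum_congr rfl fun s hs => ?_
    rw [Finset.mem_Icc] at hs
    rw [hVal s hs.1]
    ring
  have hfact : (Nat.factorial (2 * n) : ℤ) = 2 * n * (Nat.factorial (2 * n - 1) : ℤ) := by
    have h2 : Nat.factorial (2 * n) = (2 * n) * Nat.factorial (2 * n - 1) := by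
      conv_lhs => rw [show 2 * n = (2 * n - 1) + 1 by omega]
      rw [Nat.factorial_succ]
      congr 1
      omega
    rw [h2]
    push_cast
    ring
  rw [hTL, hfact] at hsum
  have hc : (2 * (Nat.factorial (2 * n - 1) : ℤ)) ≠ 0 := by positivity
  apply mul_left_cancel₀ hc
  rw [show (2 * (Nat.factorial (2 * n - 1) : ℤ)) * (∑ s ∈ Finset.Icc 1 n, (-1 : ℤ) ^ (n - s) * (s : ℤ) *
      (Nat.choose (n + s * (k + 1) - 1) (2 * n - 1) : ℤ) * (Nat.choose (2 * n) (n - s) : ℤ))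
      = 2 * ((Nat.factorial (2 * n - 1) : ℤ) * ∑ s ∈ Finset.Icc 1 n, (-1 : ℤ) ^ (n - s) * (s : ℤ) *
      (Nat.choose (n + s * (k + 1) - 1) (2 * n - 1) : ℤ) * (Nat.choose (2 * n) (n - s) : ℤ)) by ring,
    ← hsum]
  ring
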